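/- Let C_max, C_gap > 0 and let G = (U¹, U²) be a 2-player n×m normal-form game such that every entry of U¹ and U² lies in [−C_max, C_max] and any two distinct payoff entries (among all 2nm entries of U¹ and U²) differ by at least C_gap. Let j* be the (unique) maxmax column action of the column player, i.e., the unique maximizer over j of max_i U²_{ij}. Define M_c' = colmax(U² + C_max), M_*' = rowmax(M_c'), B' = relu(M_c'/C_gap − M_*'/C_gap + 1), E' = relu(U¹ + 2C_max·B' − C_max), and Q' = softmax of the vector of row sums (Σ_{j=1}^m E'_{ij})_{i=1}^n. Then for every row action i, Q'_i = exp(U¹_{ij*}) / Σ_{i'=1}^n exp(U¹_{i'j*}); that is, Q' equals the quantal best response with precision 1 of the row player to the column player playing the maxmax action j* with probability 1. -/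

import Mathlib

/-- `rowmax X` replaces each entry of `X` by the maximum entry in its row. -/
noncomputable def rowmax {n m : ℕ} (X : Matrix (Fin n) (Fin m) ℝ) :
    Matrix (Fin n) (Fin m) ℝ :=
  fun i _ => ⨆ a : Fin m, X i a

/-- `colmax X` replaces each entry of `X` by the maximum entry in its column. -/
noncomputable def colmax {n m : ℕ} (X : Matrix (Fin n) (Fin m) ℝ) :
    Matrix (Fin n) (Fin m) ℝ :=
  fun _ j => ⨆ a : Fin n, X a j

/-- The rectified linear unit `relu(x) = max {0, x}`. -/
def relu (x : ℝ) : ℝ := max 0 x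

/-- For a game `(U1, U2)` with all payoffs in `[−C_max, C_max]`, all `2nm` payoff
entries pairwise differing by at least `C_gap`, and `j*` the unique maxmax column
action, the modified GameNet computation
`Q' = softmax(row sums of relu(U1 + 2C_max·B' − C_max))` with
`B' = relu(colmax(U2 + C_max)/C_gap − rowmax(colmax(U2 + C_max))/C_gap + 1)` equals
the row player's quantal best response with precision 1 to the column player
playing `j*`. -/
theorem gamenet_computes_qbr_to_maxmax_negative {n m : ℕ} (hn : 0 < n) (hm : 0 < m)
    (U1 U2 : Matrix (Fin n) (Fin m) ℝ) (Cmax Cgap : ℝ)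
    (hCmax : 0 < Cmax) (hCgap : 0 < Cgap)
    (hbound1 : ∀ (i : Fin n) (j : Fin m), U1 i j ∈ Set.Icc (-Cmax) Cmax)
    (hbound2 : ∀ (i : Fin n) (j : Fin m), U2 i j ∈ Set.Icc (-Cmax) Cmax)
    (hdistinct1 : ∀ (i i' : Fin n) (j j' : Fin m),
      (i, j) ≠ (i', j') → Cgap ≤ |U1 i j - U1 i' j'|)
    (hdistinct2 : ∀ (i i' : Fin n) (j j' : Fin m),
      (i, j) ≠ (i', j') → Cgap ≤ |U2 i j - U2 i' j'|)
    (hdistinct12 : ∀ (i i' : Fin n) (j j' : Fin m), Cgap ≤ |U1 i j - U2 i' j'|)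
    (js : Fin m)
    (hjs : ∀ j : Fin m, j ≠ js → (⨆ i : Fin n, U2 i j) < ⨆ i : Fin n, U2 i js)
    (Mc Ms B E : Matrix (Fin n) (Fin m) ℝ) (Q : Fin n → ℝ)
    (hMc : Mc = colmax (fun i j => U2 i j + Cmax))
    (hMs : Ms = rowmax Mc)
    (hB : ∀ (i : Fin n) (j : Fin m),
      B i j = relu (Mc i j / Cgap - Ms i j / Cgap + 1))
    (hE : ∀ (i : Fin n) (j : Fin m),
      E i j = relu (U1 i j + 2 * Cmax * B i j - Cmax))
    (hQ : ∀ i : Fin n,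
      Q i = Real.exp (∑ j, E i j) / ∑ i', Real.exp (∑ j, E i' j)) :
    ∀ i : Fin n, Q i = Real.exp (U1 i js) / ∑ i', Real.exp (U1 i' js) := by
  have hne : Nonempty (Fin n) := ⟨⟨0, hn⟩⟩
  have hnem : Nonempty (Fin m) := ⟨⟨0, hm⟩⟩
  -- column maxima are attained
  have hcol : ∀ j : Fin m, ∃ i0 : Fin n, (∀ i, U2 i j ≤ U2 i0 j) ∧
      (⨆ i, U2 i j) = U2 i0 j := by
    intro j
    obtain ⟨i0, hi0⟩ := Finite.exists_max (fun i => U2 i j)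
    exact ⟨i0, hi0, le_antisymm (ciSup_le hi0)
      (le_ciSup (f := fun i => U2 i j) (Set.Finite.bddAbove (Set.finite_range _)) i0)⟩
  obtain ⟨i0, hi0, hsup_js⟩ := hcol js
  -- Mc values
  have hMc' : ∀ (i : Fin n) (j : Fin m), Mc i j = (⨆ a, U2 a j) + Cmax := by
    intro i j
    obtain ⟨i1, hi1, hsup⟩ := hcol j
    simp only [hMc, colmax]
    rw [hsup]
    refine le_antisymm (ciSup_le fun a => by linarith [hi1 a]) ?_
    exact le_ciSup (f := fun a => U2 a j + Cmax) (Set.Finite.bddAbove (Set.finite_range _)) i1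
  -- Ms values
  have hMs' : ∀ (i : Fin n) (j : Fin m), Ms i j = U2 i0 js + Cmax := by
    intro i j
    rw [hMs, rowmax]
    refine le_antisymm (ciSup_le fun b => ?_) ?_
    · rw [hMc' i b, hsup_js.symm]
      rcases eq_or_ne b js with rfl | hbj
      · exact le_rfl
      · linarith [le_of_lt (hjs b hbj)]
    · calc U2 i0 js + Cmax = Mc i js := by rw [hMc' i js, hsup_js]
        _ ≤ _ := le_ciSup (f := fun b => Mc i b) (Set.Finite.bddAbove (Set.finite_range _)) js
  -- B values
  have hBjs : ∀ i : Fin n, B i js = 1 := by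
    intro i
    rw [hB, hMc' i js, hsup_js, hMs' i js]
    simp [relu]
  have hBj : ∀ (i : Fin n) (j : Fin m), j ≠ js → B i j = 0 := by
    intro i j hj
    obtain ⟨i1, hi1, hsup⟩ := hcol j
    have hlt : U2 i1 j < U2 i0 js := by rw [← hsup, ← hsup_js]; exact hjs j hj
    have hgap : Cgap ≤ U2 i0 js - U2 i1 j := by
      have := hdistinct2 i1 i0 j js (by simp [hj])
      rwa [abs_of_nonpos (by linarith), neg_sub] at this
    rw [hB, hMc' i j, hsup, hMs' i j, relu, max_eq_left]
    have : (U2 i1 j + Cmax) / Cgap - (U2 i0 js + Cmax) / Cgap ≤ -1 := by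
      rw [div_sub_div_same, div_le_iff₀ hCgap]
      linarith
    linarith
  -- E values
  have hEjs : ∀ i : Fin n, E i js = U1 i js + Cmax := by
    intro i
    rw [hE, hBjs i, relu, max_eq_right]
    · ring
    · have := (hbound1 i js).1; linarith
  have hEj : ∀ (i : Fin n) (j : Fin m), j ≠ js → E i j = 0 := by
    intro i j hj
    rw [hE, hBj i j hj, relu, max_eq_left]
    have := (hbound1 i j).2; linarith
  have hsum : ∀ i : Fin n, (∑ j, E i j) = U1 i js + Cmax := by
    intro i
    rw [Finset.sum_eq_single js (fun b _ hb => hEj i b hb) (by simp), hEjs i]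
  intro i
  rw [hQ i]
  simp only [hsum, Real.exp_add]
  rw [← Finset.sum_mul, mul_div_mul_right _ _ (Real.exp_pos Cmax).ne']
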